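/- Let α ∈ ℝ and β > 0. Define real polynomials q_n by q_0 = 1, q_1(λ) = 1-αλ, and q_{n+1}(λ) = (1-αλ)q_n(λ) + β(q_n(λ)-q_{n-1}(λ)) for n ≥ 1. Then for every n ≥ 0 and every λ ∈ ℝ, q_n(λ) = β^{(n+1)/2}·( U_n(z)/√β − U_{n+1}(z) + 2·T_{n+1}(z) ), where z = (1+β-αλ)/(2√β) and T_k, U_k denote the Chebyshev polynomials of the first and second kind evaluated at z. -/

import Mathlib

open Polynomial

/-- The residual polynomials of constant-rate Heavy Ball are given explicitly in terms of
Chebyshev polynomials of the first and second kind: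
`q_n(λ) = β^{(n+1)/2} ( U_n(z)/√β − U_{n+1}(z) + 2 T_{n+1}(z) )` with
`z = (1+β-αλ)/(2√β)`. -/
theorem hb_residual_polynomial_chebyshev
    (α β : ℝ) (hβ : 0 < β)
    (q : ℕ → ℝ → ℝ)
    (hq0 : ∀ l, q 0 l = 1)
    (hq1 : ∀ l, q 1 l = 1 - α * l)
    (hqrec : ∀ n : ℕ, 1 ≤ n → ∀ l,
      q (n + 1) l = (1 - α * l) * q n l + β * (q n l - q (n - 1) l)) :
    ∀ (n : ℕ) (l : ℝ),
      q n l = β ^ (((n : ℝ) + 1) / 2) *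
        ((Polynomial.Chebyshev.U ℝ (n : ℤ)).eval ((1 + β - α * l) / (2 * Real.sqrt β))
            / Real.sqrt β
          - (Polynomial.Chebyshev.U ℝ ((n : ℤ) + 1)).eval ((1 + β - α * l) / (2 * Real.sqrt β))
          + 2 * (Polynomial.Chebyshev.T ℝ ((n : ℤ) + 1)).eval
              ((1 + β - α * l) / (2 * Real.sqrt β))) := by
  have hs0 : Real.sqrt β ≠ 0 := ne_of_gt (Real.sqrt_pos.2 hβ)
  set s := Real.sqrt β with hsdef
  have hs2 : s * s = β := Real.mul_self_sqrt hβ.le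
  have hpow : ∀ n : ℕ, β ^ (((n : ℝ) + 1) / 2) = s ^ (n + 1) := by
    intro n
    rw [hsdef, Real.sqrt_eq_rpow, ← Real.rpow_natCast (β ^ (1/2 : ℝ)) (n+1),
        ← Real.rpow_mul hβ.le]
    congr 1
    push_cast
    ring
  intro n
  induction n using Nat.twoStepInduction with
  | zero =>
    intro l
    rw [hq0, hpow 0]
    set z := (1 + β - α * l) / (2 * s) with hz
    clear_value z
    norm_num [Polynomial.Chebyshev.U_zero, Polynomial.Chebyshev.U_one,
      Polynomial.Chebyshev.T_one]
    field_simp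
  | one =>
    intro l
    rw [hq1, hpow 1]
    set z := (1 + β - α * l) / (2 * s) with hz
    clear_value z
    have h2sz : 2 * s * z = 1 + β - α * l := by
      rw [hz]; field_simp
    norm_num [Polynomial.Chebyshev.U_one, Polynomial.Chebyshev.U_two,
      Polynomial.Chebyshev.T_two]
    rw [← hs2] at h2sz
    field_simp
    linear_combination -1 * h2sz
  | more n ih1 ih2 =>
    intro l
    have hrec := hqrec (n + 1) (by omega) l
    simp only [Nat.add_sub_cancel] at hrec
    rw [hrec, ih1 l, ih2 l, hpow n, hpow (n+1), hpow (n+2)]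
    set z := (1 + β - α * l) / (2 * s) with hz
    clear_value z
    have h2sz : 2 * s * z = 1 + β - α * l := by
      rw [hz]; field_simp
    have hUe : ∀ m : ℤ, (Chebyshev.U ℝ (m+2)).eval z
        = 2 * z * (Chebyshev.U ℝ (m+1)).eval z - (Chebyshev.U ℝ m).eval z := by
      intro m
      rw [Polynomial.Chebyshev.U_add_two]
      simp
    have hTe : ∀ m : ℤ, (Chebyshev.T ℝ (m+2)).eval z
        = 2 * z * (Chebyshev.T ℝ (m+1)).eval z - (Chebyshev.T ℝ m).eval z := by
      intro m
      rw [Polynomial.Chebyshev.T_add_two]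
      simp
    have e1 : ((n + 2 : ℕ) : ℤ) = (n : ℤ) + 2 := by push_cast; ring
    have e3 : ((n + 1 : ℕ) : ℤ) = (n : ℤ) + 1 := by push_cast; ring
    have f1 : (n : ℤ) + 1 + 1 = (n : ℤ) + 2 := by ring
    have f2 : (n : ℤ) + 2 + 1 = (n : ℤ) + 1 + 2 := by ring
    rw [e3, e1, f2, f1, hUe ((n : ℤ) + 1), hTe ((n : ℤ) + 1), f1, hUe (n : ℤ), hTe (n : ℤ)]
    have hal : α * l = 1 + s * s - 2 * s * z := by rw [← hs2] at h2sz; linarith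
    rw [← hs2, hal]
    field_simp
    ring
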